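/- arXiv:1510.03454 — 2 statements merged into one kernel-verified Lean document; each statement's English description precedes it below -/
import Mathlib

section
/- Let (B_i^j)_{i,j∈ℤ} define an OQRW on ℤ and let A ⊆ ℤ. For i ∉ A and positive semidefinite X define k̂_i(X) = ∑_{r≥1} r · b_r(X) ∈ [0,∞], where b_r(X) is the sum of tr(C X C*) over all first-passage paths from i to A of length r with path operator C; for i ∈ A set k̂_i(X) = 0. Assume hitting A is certain: h_j^A(ρ) = 1 for every j ∉ A and every density matrix ρ. Then: (1) for every i ∉ A and every density matrix ρ, k̂_i(ρ) = 1 + ∑_{j∉A} k̂_j( B_i^j ρ (B_i^j)* ) (arithmetic in [0,∞]); and (2) if (y_i)_{i∈ℤ} is any family of [0,∞]-valued functions on positive semidefinite matrices that are additive and positively homogeneous, with y_i = 0 for i ∈ A and y_i(X) = tr(X) + ∑_{j∉A} y_j( B_i^j X (B_i^j)* ) for all i ∉ A and positive semidefinite X, then y_i(ρ) ≥ k̂_i(ρ) for every i and every density matrix ρ. Thus (k̂_i) is the minimal nonnegative solution of this system. -/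
open Matrix ComplexOrder
open scoped ENNReal NNReal

/-- A first-passage path from `i` to the set `A ⊆ ℤ`: a finite sequence
i = x₀, x₁, …, x_r with r ≥ 1, x₀, …, x_{r−1} ∉ A and x_r ∈ A; `r` is its length. -/
structure FPPath (A : Set ℤ) (i : ℤ) where
  r : ℕ
  x : ℕ → ℤ
  hr : 1 ≤ r
  hx0 : x 0 = i
  hmid : ∀ m, m < r → x m ∉ A
  hlast : x r ∈ A
  htail : ∀ m, r ≤ m → x m = x r

/-- The path operator C = B_{x_{r−1}}^{x_r} ⋯ B_{x₁}^{x₂} B_{x₀}^{x₁}. -/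
noncomputable def pathOp {k : ℕ} (B : ℤ → ℤ → Matrix (Fin k) (Fin k) ℂ)
    {A : Set ℤ} {i : ℤ} (p : FPPath A i) : Matrix (Fin k) (Fin k) ℂ :=
  (List.range p.r).foldl (fun M m => B (p.x m) (p.x (m + 1)) * M) 1

-- Hitting probability h_i^A(ρ): sum of tr(C ρ C*) over all first-passage paths, 1 on A.
open Classical in
noncomputable def hitProb {k : ℕ} (B : ℤ → ℤ → Matrix (Fin k) (Fin k) ℂ)
    (A : Set ℤ) (i : ℤ) (ρ : Matrix (Fin k) (Fin k) ℂ) : ℝ :=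
  if i ∈ A then 1
  else ∑' p : FPPath A i, (Matrix.trace (pathOp B p * ρ * (pathOp B p)ᴴ)).re

-- Expected hitting time k̂_i(X) = ∑_{r≥1} r·b_r(X) ∈ [0,∞], i.e. the sum over all
-- first-passage paths of (length)·tr(C X C*); set to 0 on A.
open Classical in
noncomputable def meanHit {k : ℕ} (B : ℤ → ℤ → Matrix (Fin k) (Fin k) ℂ)
    (A : Set ℤ) (i : ℤ) (X : Matrix (Fin k) (Fin k) ℂ) : ℝ≥0∞ :=
  if i ∈ A then 0
  else ∑' p : FPPath A i,
    (p.r : ℝ≥0∞) * ENNReal.ofReal (Matrix.trace (pathOp B p * X * (pathOp B p)ᴴ)).re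

theorem FPPath.ext' {A : Set ℤ} {i : ℤ} {p q : FPPath A i}
    (hr : p.r = q.r) (hx : p.x = q.x) : p = q := by
  cases p; cases q; simp_all

noncomputable def prodF {k : ℕ} (f : ℕ → Matrix (Fin k) (Fin k) ℂ) (n : ℕ) :
    Matrix (Fin k) (Fin k) ℂ :=
  (List.range n).foldl (fun M m => f m * M) 1

lemma prodF_succ {k : ℕ} (f : ℕ → Matrix (Fin k) (Fin k) ℂ) (n : ℕ) :
    prodF f (n + 1) = f n * prodF f n := by
  simp [prodF, List.range_succ]

lemma prodF_shift {k : ℕ} (f g : ℕ → Matrix (Fin k) (Fin k) ℂ)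
    (h0 : ∀ m, g (m + 1) = f m) (n : ℕ) :
    prodF g (n + 1) = prodF f n * g 0 := by
  induction n with
  | zero => simp [prodF, List.range_succ]
  | succ n ih => rw [prodF_succ, ih, h0, prodF_succ, mul_assoc]

lemma pathOp_eq_prodF {k : ℕ} (B : ℤ → ℤ → Matrix (Fin k) (Fin k) ℂ)
    {A : Set ℤ} {i : ℤ} (p : FPPath A i) :
    pathOp B p = prodF (fun m => B (p.x m) (p.x (m + 1))) p.r := rfl

section Paths
variable {A : Set ℤ}

def singleP (i j : ℤ) (hi : i ∉ A) (hj : j ∈ A) : FPPath A i where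
  r := 1
  x := fun m => if m = 0 then i else j
  hr := le_refl 1
  hx0 := rfl
  hmid := fun m hm => by
    have : m = 0 := by omega
    simpa [this] using hi
  hlast := by simpa using hj
  htail := fun m hm => by
    have h1 : m ≠ 0 := by omega
    simp [h1]

def extendP (i : ℤ) (hi : i ∉ A) {j : ℤ} (p : FPPath A j) : FPPath A i where
  r := p.r + 1
  x := fun m => if m = 0 then i else p.x (m - 1)
  hr := by omega
  hx0 := rfl
  hmid := fun m hm => by
    rcases m with _ | m
    · simpa using hi
    · simpa using p.hmid m (by omega)
  hlast := by simpa using p.hlast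
  htail := fun m hm => by
    rcases m with _ | m
    · omega
    · simpa using p.htail m (by omega)

def shiftP {i : ℤ} (q : FPPath A i) (h2 : 2 ≤ q.r) : FPPath A (q.x 1) where
  r := q.r - 1
  x := fun m => q.x (m + 1)
  hr := by omega
  hx0 := rfl
  hmid := fun m hm => q.hmid (m + 1) (by omega)
  hlast := by
    show q.x (q.r - 1 + 1) ∈ A
    have h : q.r - 1 + 1 = q.r := by omega
    rw [h]; exact q.hlast
  htail := fun m hm => by
    have h1 : q.x (m + 1) = q.x q.r := q.htail (m + 1) (by omega)
    have h2' : q.x (q.r - 1 + 1) = q.x q.r := by rw [Nat.sub_add_cancel (by omega)]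
    show q.x (m + 1) = q.x (q.r - 1 + 1)
    rw [h1, h2']

lemma r_eq_one {i : ℤ} (q : FPPath A i) (h : q.x 1 ∈ A) : q.r = 1 := by
  by_contra hne
  exact q.hmid 1 (by have := q.hr; omega) h

lemma two_le_r {i : ℤ} (q : FPPath A i) (h : q.x 1 ∉ A) : 2 ≤ q.r := by
  by_contra hne
  have h1 : q.r = 1 := by have := q.hr; omega
  exact h (h1 ▸ q.hlast)

lemma sigmaP_eq {j j' : {l : ℤ // l ∉ A}} {p : FPPath A (j : ℤ)} {p' : FPPath A (j' : ℤ)}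
    (hr : p.r = p'.r) (hx : p.x = p'.x) :
    (⟨j, p⟩ : Σ l : {l : ℤ // l ∉ A}, FPPath A (l : ℤ)) = ⟨j', p'⟩ := by
  have hj : j = j' := Subtype.ext (by rw [← p.hx0, ← p'.hx0, hx])
  subst hj
  simp only [Sigma.mk.inj_iff, heq_eq_eq]
  exact ⟨trivial, FPPath.ext' hr hx⟩

open Classical in
noncomputable def pathEquiv (i : ℤ) (hi : i ∉ A) :
    FPPath A i ≃ ({j : ℤ // j ∈ A} ⊕ Σ j : {j : ℤ // j ∉ A}, FPPath A (j : ℤ)) where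
  toFun q :=
    if h : q.x 1 ∈ A then .inl ⟨q.x 1, h⟩
    else .inr ⟨⟨q.x 1, h⟩, shiftP q (two_le_r q h)⟩
  invFun s := match s with
    | .inl ⟨j, hj⟩ => singleP i j hi hj
    | .inr ⟨⟨_, _⟩, p⟩ => extendP i hi p
  left_inv q := by
    by_cases h : q.x 1 ∈ A
    · simp only [dif_pos h]
      refine FPPath.ext' ((r_eq_one q h).symm) (funext fun m => ?_)
      rcases m with _ | m
      · exact q.hx0.symm
      · show q.x 1 = q.x (m + 1)
        rw [q.htail (m+1) (by rw [r_eq_one q h]; omega), r_eq_one q h]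
    · simp only [dif_neg h]
      refine FPPath.ext' ?_ (funext fun m => ?_)
      · show q.r - 1 + 1 = q.r
        have := two_le_r q h; omega
      · rcases m with _ | m
        · exact q.hx0.symm
        · rfl
  right_inv s := by
    rcases s with ⟨j, hj⟩ | ⟨⟨j, hj⟩, p⟩
    · have hx1 : (singleP i j hi hj).x 1 = j := rfl
      simp only [hx1, dif_pos hj]
    · have hx1 : (extendP i hi p).x 1 = j := p.hx0
      have hnot : (extendP i hi p).x 1 ∉ A := by rw [hx1]; exact hj
      simp only [dif_neg hnot]
      refine congrArg Sum.inr (sigmaP_eq ?_ (funext fun m => ?_))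
      · show (extendP i hi p).r - 1 = p.r
        show p.r + 1 - 1 = p.r
        omega
      · show (extendP i hi p).x (m + 1) = p.x m
        simp [extendP]

lemma pathOp_singleP {k : ℕ} (B : ℤ → ℤ → Matrix (Fin k) (Fin k) ℂ)
    (i j : ℤ) (hi : i ∉ A) (hj : j ∈ A) :
    pathOp B (singleP i j hi hj) = B i j := by
  simp [pathOp, singleP, List.range_succ]

lemma pathOp_extendP {k : ℕ} (B : ℤ → ℤ → Matrix (Fin k) (Fin k) ℂ)
    (i : ℤ) (hi : i ∉ A) {j : ℤ} (p : FPPath A j) :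
    pathOp B (extendP i hi p) = pathOp B p * B i j := by
  rw [pathOp_eq_prodF, pathOp_eq_prodF]
  show prodF _ (p.r + 1) = _
  rw [prodF_shift (fun m => B (p.x m) (p.x (m + 1)))
      (fun m => B ((extendP i hi p).x m) ((extendP i hi p).x (m + 1)))
      (fun m => by simp [extendP]) p.r]
  have : (extendP i hi p).x 0 = i := rfl
  have h1 : (extendP i hi p).x 1 = p.x 0 := rfl
  rw [this, h1, p.hx0]

end Paths

lemma my_tsum_sum_type {α β : Type} (f : α ⊕ β → ℝ≥0∞) :
    ∑' x, f x = ∑' a, f (.inl a) + ∑' b, f (.inr b) := by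
  rw [← (Equiv.sumEquivSigmaBool α β).symm.tsum_eq f, ENNReal.tsum_sigma']
  rw [tsum_bool]
  rfl

lemma tsum_path_decomp {A : Set ℤ} {i : ℤ} (hi : i ∉ A) (F : FPPath A i → ℝ≥0∞) :
    ∑' q : FPPath A i, F q
      = (∑' j : {j : ℤ // j ∈ A}, F (singleP i (j : ℤ) hi j.2))
        + ∑' j : {j : ℤ // j ∉ A}, ∑' p : FPPath A (j : ℤ), F (extendP i hi p) := by
  rw [← (pathEquiv i hi).symm.tsum_eq F, my_tsum_sum_type, ENNReal.tsum_sigma']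
  rfl

section PSD
variable {k : ℕ}

lemma psd_diag_nonneg {M : Matrix (Fin k) (Fin k) ℂ} (hM : M.PosSemidef) (i : Fin k) :
    0 ≤ M i i := by
  exact hM.diag_nonneg

lemma psd_trace_nonneg {M : Matrix (Fin k) (Fin k) ℂ} (hM : M.PosSemidef) :
    0 ≤ Matrix.trace M := by
  unfold Matrix.trace
  exact Finset.sum_nonneg fun i _ => psd_diag_nonneg hM i

lemma psd_re_trace_nonneg {M : Matrix (Fin k) (Fin k) ℂ} (hM : M.PosSemidef) :
    0 ≤ (Matrix.trace M).re :=
  (Complex.nonneg_iff.mp (psd_trace_nonneg hM)).1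

lemma psd_trace_eq_re {M : Matrix (Fin k) (Fin k) ℂ} (hM : M.PosSemidef) :
    Matrix.trace M = (((Matrix.trace M).re : ℝ) : ℂ) := by
  have h := (Complex.nonneg_iff.mp (psd_trace_nonneg hM)).2
  exact Complex.ext rfl h.symm

lemma psd_eq_zero_of_trace {M : Matrix (Fin k) (Fin k) ℂ} (hM : M.PosSemidef)
    (h : (Matrix.trace M).re = 0) : M = 0 := by
  have htr : Matrix.trace M = 0 := by rw [psd_trace_eq_re hM, h]; simp
  exact hM.trace_eq_zero_iff.mp htr

lemma psd_smul {M : Matrix (Fin k) (Fin k) ℂ} (hM : M.PosSemidef) {c : ℝ} (hc : 0 ≤ c) :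
    (((c : ℝ) : ℂ) • M).PosSemidef := by
  constructor
  · show (((c : ℝ) : ℂ) • M)ᴴ = _
    rw [Matrix.conjTranspose_smul, hM.1.eq]
    congr 1
    simp
  · intro x
    exact (hM.smul (a := ((c : ℝ) : ℂ)) (by exact_mod_cast hc)).2 x

lemma psd_path {B : ℤ → ℤ → Matrix (Fin k) (Fin k) ℂ} {X : Matrix (Fin k) (Fin k) ℂ}
    (hX : X.PosSemidef) (C : Matrix (Fin k) (Fin k) ℂ) :
    (C * X * Cᴴ).PosSemidef := hX.mul_mul_conjTranspose_same C

end PSD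

section Hit
variable {k : ℕ} (B : ℤ → ℤ → Matrix (Fin k) (Fin k) ℂ) (A : Set ℤ)

lemma tsum_hit
    (hcertain : ∀ j ∉ A, ∀ ρ : Matrix (Fin k) (Fin k) ℂ, ρ.PosSemidef →
      Matrix.trace ρ = 1 → hitProb B A j ρ = 1)
    {j : ℤ} (hj : j ∉ A) {X : Matrix (Fin k) (Fin k) ℂ} (hX : X.PosSemidef) :
    ∑' p : FPPath A j, ENNReal.ofReal (Matrix.trace (pathOp B p * X * (pathOp B p)ᴴ)).re
      = ENNReal.ofReal (Matrix.trace X).re := by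
  set c : ℝ := (Matrix.trace X).re with hc
  rcases eq_or_lt_of_le (psd_re_trace_nonneg hX) with h0 | hpos
  · -- trace is zero, X = 0
    have hX0 : X = 0 := psd_eq_zero_of_trace hX h0.symm
    subst hX0
    simp
    exact le_of_eq h0.symm
  · set ρ : Matrix (Fin k) (Fin k) ℂ := ((c⁻¹ : ℝ) : ℂ) • X with hρ
    have hρpsd : ρ.PosSemidef := psd_smul hX (inv_nonneg.mpr hpos.le)
    have hρtr : Matrix.trace ρ = 1 := by
      rw [hρ, Matrix.trace_smul, smul_eq_mul, psd_trace_eq_re hX, ← hc,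
        ← Complex.ofReal_mul, inv_mul_cancel₀ hpos.ne']
      simp
    have h1 := hcertain j hj ρ hρpsd hρtr
    unfold hitProb at h1
    rw [if_neg hj] at h1
    have hconv : ∀ p : FPPath A j,
        (Matrix.trace (pathOp B p * X * (pathOp B p)ᴴ)).re
          = c * (Matrix.trace (pathOp B p * ρ * (pathOp B p)ᴴ)).re := by
      intro p
      rw [hρ, Matrix.mul_smul, Matrix.smul_mul, Matrix.trace_smul, smul_eq_mul]
      rw [psd_trace_eq_re (hX.mul_mul_conjTranspose_same (pathOp B p))]
      rw [← Complex.ofReal_mul]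
      rw [Complex.ofReal_re, Complex.ofReal_re]
      field_simp
      rw [mul_div_cancel_right₀ _ hpos.ne']
    have hsum : Summable (fun p : FPPath A j =>
        (Matrix.trace (pathOp B p * ρ * (pathOp B p)ᴴ)).re) := by
      by_contra hns
      rw [tsum_eq_zero_of_not_summable hns] at h1
      norm_num at h1
    have hnn : ∀ p : FPPath A j,
        0 ≤ (Matrix.trace (pathOp B p * ρ * (pathOp B p)ᴴ)).re :=
      fun p => psd_re_trace_nonneg (hρpsd.mul_mul_conjTranspose_same (pathOp B p))
    calc ∑' p : FPPath A j, ENNReal.ofReal (Matrix.trace (pathOp B p * X * (pathOp B p)ᴴ)).re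
        = ∑' p : FPPath A j, ENNReal.ofReal c *
            ENNReal.ofReal (Matrix.trace (pathOp B p * ρ * (pathOp B p)ᴴ)).re := by
          refine tsum_congr fun p => ?_
          rw [hconv p, ENNReal.ofReal_mul hpos.le]
      _ = ENNReal.ofReal c * ∑' p : FPPath A j,
            ENNReal.ofReal (Matrix.trace (pathOp B p * ρ * (pathOp B p)ᴴ)).re :=
          ENNReal.tsum_mul_left
      _ = ENNReal.ofReal c * ENNReal.ofReal 1 := by
          rw [← ENNReal.ofReal_tsum_of_nonneg hnn hsum, h1]
      _ = ENNReal.ofReal c := by simp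

end Hit

section Main
variable {k : ℕ} (B : ℤ → ℤ → Matrix (Fin k) (Fin k) ℂ) (A : Set ℤ)

lemma meanHit_eq {i : ℤ} (hi : i ∉ A) (X : Matrix (Fin k) (Fin k) ℂ) :
    meanHit B A i X = ∑' p : FPPath A i,
      (p.r : ℝ≥0∞) * ENNReal.ofReal (Matrix.trace (pathOp B p * X * (pathOp B p)ᴴ)).re := by
  unfold meanHit; rw [if_neg hi]

lemma trace_extendP {i : ℤ} (hi : i ∉ A) {j : ℤ} (p : FPPath A j)
    (X : Matrix (Fin k) (Fin k) ℂ) :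
    pathOp B (extendP i hi p) * X * (pathOp B (extendP i hi p))ᴴ
      = pathOp B p * (B i j * X * (B i j)ᴴ) * (pathOp B p)ᴴ := by
  rw [pathOp_extendP, Matrix.conjTranspose_mul]
  simp only [Matrix.mul_assoc]

lemma tsum_split (f : ℤ → ℝ≥0∞) :
    ∑' j : ℤ, f j
      = (∑' j : {j : ℤ // j ∈ A}, f (j : ℤ)) + ∑' j : {j : ℤ // j ∉ A}, f (j : ℤ) := by
  exact (Summable.tsum_add_tsum_compl (s := A) ENNReal.summable ENNReal.summable).symm

lemma tsum_BXB (hfin : ∀ i, {j : ℤ | B i j ≠ 0}.Finite)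
    (hunit : ∀ i, ∑ᶠ j : ℤ, (B i j)ᴴ * B i j = 1)
    (i : ℤ) (ρ : Matrix (Fin k) (Fin k) ℂ) (hρ : ρ.PosSemidef)
    (htr : Matrix.trace ρ = 1) :
    ∑' j : ℤ, ENNReal.ofReal (Matrix.trace (B i j * ρ * (B i j)ᴴ)).re = 1 := by
  classical
  set s := (hfin i).toFinset with hs
  have hmem : ∀ j : ℤ, j ∉ s → B i j = 0 := by
    intro j hj
    by_contra hne
    exact hj ((hfin i).mem_toFinset.mpr hne)
  have hsum1 : ∑ j ∈ s, (B i j)ᴴ * B i j = 1 := by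
    rw [← hunit i]
    refine (finsum_eq_finset_sum_of_support_subset _ ?_).symm
    intro j hj
    simp only [Function.mem_support] at hj
    have : B i j ≠ 0 := by
      intro h0
      apply hj
      rw [h0]
      simp
    exact (hfin i).mem_toFinset.mpr this
  have h2 : ∑ j ∈ s, Matrix.trace (B i j * ρ * (B i j)ᴴ) = 1 := by
    calc ∑ j ∈ s, Matrix.trace (B i j * ρ * (B i j)ᴴ)
        = ∑ j ∈ s, Matrix.trace ((B i j)ᴴ * B i j * ρ) :=
          Finset.sum_congr rfl fun j _ => Matrix.trace_mul_cycle (B i j) ρ (B i j)ᴴ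
      _ = Matrix.trace ((∑ j ∈ s, (B i j)ᴴ * B i j) * ρ) := by
          rw [Finset.sum_mul, Matrix.trace_sum]
      _ = 1 := by rw [hsum1, Matrix.one_mul, htr]
  have key : ∑ j ∈ s, (Matrix.trace (B i j * ρ * (B i j)ᴴ)).re = 1 := by
    rw [← Complex.re_sum, h2, Complex.one_re]
  rw [tsum_eq_sum (s := s) (fun j hj => by rw [hmem j hj]; simp)]
  rw [← ENNReal.ofReal_sum_of_nonneg
    (fun j _ => psd_re_trace_nonneg (hρ.mul_mul_conjTranspose_same (B i j)))]
  rw [key, ENNReal.ofReal_one]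

lemma meanHit_rec
    (hfin : ∀ i, {j : ℤ | B i j ≠ 0}.Finite)
    (hunit : ∀ i, ∑ᶠ j : ℤ, (B i j)ᴴ * B i j = 1)
    (hcertain : ∀ j ∉ A, ∀ ρ : Matrix (Fin k) (Fin k) ℂ, ρ.PosSemidef →
      Matrix.trace ρ = 1 → hitProb B A j ρ = 1)
    {i : ℤ} (hi : i ∉ A) (ρ : Matrix (Fin k) (Fin k) ℂ) (hρ : ρ.PosSemidef)
    (htr : Matrix.trace ρ = 1) :
    meanHit B A i ρ =
      1 + ∑' j : {j : ℤ // j ∉ A}, meanHit B A j (B i j * ρ * (B i (j : ℤ))ᴴ) := by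
  rw [meanHit_eq B A hi]
  rw [tsum_path_decomp hi (fun q =>
    (q.r : ℝ≥0∞) * ENNReal.ofReal (Matrix.trace (pathOp B q * ρ * (pathOp B q)ᴴ)).re)]
  have hsingle : (∑' j : {j : ℤ // j ∈ A},
      (((singleP i (j : ℤ) hi j.2).r : ℕ) : ℝ≥0∞) * ENNReal.ofReal
        (Matrix.trace (pathOp B (singleP i (j : ℤ) hi j.2) * ρ *
          (pathOp B (singleP i (j : ℤ) hi j.2))ᴴ)).re)
      = ∑' j : {j : ℤ // j ∈ A},
        ENNReal.ofReal (Matrix.trace (B i j * ρ * (B i (j : ℤ))ᴴ)).re := by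
    refine tsum_congr fun j => ?_
    rw [pathOp_singleP]
    norm_num [singleP]
  have hext : ∀ j : {j : ℤ // j ∉ A}, (∑' p : FPPath A (j : ℤ),
      (((extendP i hi p).r : ℕ) : ℝ≥0∞) * ENNReal.ofReal
        (Matrix.trace (pathOp B (extendP i hi p) * ρ * (pathOp B (extendP i hi p))ᴴ)).re)
      = meanHit B A j (B i j * ρ * (B i (j : ℤ))ᴴ)
        + ENNReal.ofReal (Matrix.trace (B i j * ρ * (B i (j : ℤ))ᴴ)).re := by
    intro j
    have : ∀ p : FPPath A (j : ℤ),
        (((extendP i hi p).r : ℕ) : ℝ≥0∞) * ENNReal.ofReal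
          (Matrix.trace (pathOp B (extendP i hi p) * ρ * (pathOp B (extendP i hi p))ᴴ)).re
        = (p.r : ℝ≥0∞) * ENNReal.ofReal
            (Matrix.trace (pathOp B p * (B i j * ρ * (B i (j : ℤ))ᴴ) * (pathOp B p)ᴴ)).re
          + ENNReal.ofReal
            (Matrix.trace (pathOp B p * (B i j * ρ * (B i (j : ℤ))ᴴ) * (pathOp B p)ᴴ)).re := by
      intro p
      rw [trace_extendP B A hi p ρ]
      show ((p.r + 1 : ℕ) : ℝ≥0∞) * _ = _
      push_cast
      ring
    rw [tsum_congr this, ENNReal.tsum_add]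
    congr 1
    · rw [meanHit_eq B A j.2]
    · exact tsum_hit B A hcertain j.2 (hρ.mul_mul_conjTranspose_same (B i j))
  rw [hsingle, tsum_congr hext, ENNReal.tsum_add]
  have hone : (∑' j : {j : ℤ // j ∈ A},
        ENNReal.ofReal (Matrix.trace (B i j * ρ * (B i (j : ℤ))ᴴ)).re)
      + (∑' j : {j : ℤ // j ∉ A},
        ENNReal.ofReal (Matrix.trace (B i j * ρ * (B i (j : ℤ))ᴴ)).re) = 1 := by
    rw [← tsum_split A (fun j => ENNReal.ofReal (Matrix.trace (B i j * ρ * (B i j)ᴴ)).re)]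
    exact tsum_BXB B hfin hunit i ρ hρ htr
  calc _ = ((∑' j : {j : ℤ // j ∈ A},
        ENNReal.ofReal (Matrix.trace (B i j * ρ * (B i (j : ℤ))ᴴ)).re)
      + (∑' j : {j : ℤ // j ∉ A},
        ENNReal.ofReal (Matrix.trace (B i j * ρ * (B i (j : ℤ))ᴴ)).re))
      + ∑' j : {j : ℤ // j ∉ A}, meanHit B A j (B i j * ρ * (B i (j : ℤ))ᴴ) := by ring
  _ = _ := by rw [hone]

open Classical in
noncomputable def gfun (i : ℤ) (m : ℕ) (X : Matrix (Fin k) (Fin k) ℂ) : ℝ≥0∞ :=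
  ∑' p : FPPath A i, if m < p.r then
    ENNReal.ofReal (Matrix.trace (pathOp B p * X * (pathOp B p)ᴴ)).re else 0

lemma tsum_ite_lt (r : ℕ) (t : ℝ≥0∞) :
    ∑' m : ℕ, (if m < r then t else 0) = (r : ℝ≥0∞) * t := by
  calc ∑' m : ℕ, (if m < r then t else 0)
      = ∑ m ∈ Finset.range r, (if m < r then t else 0) :=
        tsum_eq_sum (fun m hm => if_neg (by simpa using hm))
    _ = ∑ _m ∈ Finset.range r, t :=
        Finset.sum_congr rfl fun m hm => if_pos (Finset.mem_range.mp hm)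
    _ = (r : ℝ≥0∞) * t := by
        rw [Finset.sum_const, Finset.card_range, nsmul_eq_mul]

lemma meanHit_eq_tsum_gfun {i : ℤ} (hi : i ∉ A) (X : Matrix (Fin k) (Fin k) ℂ) :
    meanHit B A i X = ∑' m : ℕ, gfun B A i m X := by
  rw [meanHit_eq B A hi]
  unfold gfun
  rw [ENNReal.tsum_comm]
  exact tsum_congr fun p => (tsum_ite_lt p.r _).symm

lemma gfun_zero
    (hcertain : ∀ j ∉ A, ∀ ρ : Matrix (Fin k) (Fin k) ℂ, ρ.PosSemidef →
      Matrix.trace ρ = 1 → hitProb B A j ρ = 1)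
    {i : ℤ} (hi : i ∉ A) {X : Matrix (Fin k) (Fin k) ℂ} (hX : X.PosSemidef) :
    gfun B A i 0 X = ENNReal.ofReal (Matrix.trace X).re := by
  unfold gfun
  rw [tsum_congr (fun p : FPPath A i => if_pos (by have := p.hr; omega))]
  exact tsum_hit B A hcertain hi hX

lemma gfun_succ {i : ℤ} (hi : i ∉ A) (m : ℕ) (X : Matrix (Fin k) (Fin k) ℂ) :
    gfun B A i (m + 1) X
      = ∑' j : {j : ℤ // j ∉ A}, gfun B A (j : ℤ) m (B i j * X * (B i (j : ℤ))ᴴ) := by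
  unfold gfun
  rw [tsum_path_decomp hi (fun q => if m + 1 < q.r then
    ENNReal.ofReal (Matrix.trace (pathOp B q * X * (pathOp B q)ᴴ)).re else 0)]
  have hs : (∑' j : {j : ℤ // j ∈ A}, (if m + 1 < (singleP i (j : ℤ) hi j.2).r then
      ENNReal.ofReal (Matrix.trace (pathOp B (singleP i (j : ℤ) hi j.2) * X *
        (pathOp B (singleP i (j : ℤ) hi j.2))ᴴ)).re else 0)) = 0 := by
    have : ∀ j : {j : ℤ // j ∈ A}, (if m + 1 < (singleP i (j : ℤ) hi j.2).r then
        ENNReal.ofReal (Matrix.trace (pathOp B (singleP i (j : ℤ) hi j.2) * X *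
          (pathOp B (singleP i (j : ℤ) hi j.2))ᴴ)).re else 0) = 0 := by
      intro j
      exact if_neg (by show ¬ (m + 1 < 1); omega)
    rw [tsum_congr this, tsum_zero]
  rw [hs, zero_add]
  refine tsum_congr fun j => tsum_congr fun p => ?_
  rw [trace_extendP B A hi p X]
  show (if m + 1 < p.r + 1 then _ else _) = _
  by_cases h : m < p.r
  · rw [if_pos (by omega), if_pos h]
  · rw [if_neg (by omega), if_neg h]

lemma partial_le
    (hcertain : ∀ j ∉ A, ∀ ρ : Matrix (Fin k) (Fin k) ℂ, ρ.PosSemidef →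
      Matrix.trace ρ = 1 → hitProb B A j ρ = 1)
    (y : ℤ → (Matrix (Fin k) (Fin k) ℂ → ℝ≥0∞))
    (hrec : ∀ i ∉ A, ∀ X : Matrix (Fin k) (Fin k) ℂ, X.PosSemidef →
      y i X = ENNReal.ofReal (Matrix.trace X).re +
        ∑' j : {j : ℤ // j ∉ A}, y j (B i j * X * (B i (j : ℤ))ᴴ)) :
    ∀ n : ℕ, ∀ i ∉ A, ∀ X : Matrix (Fin k) (Fin k) ℂ, X.PosSemidef →
      ∑ m ∈ Finset.range n, gfun B A i m X ≤ y i X := by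
  intro n
  induction n with
  | zero => intro i hi X hX; simp
  | succ n ih =>
    intro i hi X hX
    rw [Finset.sum_range_succ']
    have h1 : ∑ m ∈ Finset.range n, gfun B A i (m + 1) X
        = ∑' j : {j : ℤ // j ∉ A},
            ∑ m ∈ Finset.range n, gfun B A (j : ℤ) m (B i j * X * (B i (j : ℤ))ᴴ) := by
      rw [Finset.sum_congr rfl fun m _ => gfun_succ B A hi m X]
      exact (Summable.tsum_finsetSum fun m _ => ENNReal.summable).symm
    rw [h1, gfun_zero B A hcertain hi hX, hrec i hi X hX, add_comm]
    refine add_le_add le_rfl (ENNReal.tsum_le_tsum fun j => ?_)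
    exact ih (j : ℤ) j.2 _ (hX.mul_mul_conjTranspose_same (B i j))

lemma meanHit_le
    (hcertain : ∀ j ∉ A, ∀ ρ : Matrix (Fin k) (Fin k) ℂ, ρ.PosSemidef →
      Matrix.trace ρ = 1 → hitProb B A j ρ = 1)
    (y : ℤ → (Matrix (Fin k) (Fin k) ℂ → ℝ≥0∞))
    (hA : ∀ i ∈ A, ∀ X : Matrix (Fin k) (Fin k) ℂ, y i X = 0)
    (hrec : ∀ i ∉ A, ∀ X : Matrix (Fin k) (Fin k) ℂ, X.PosSemidef →
      y i X = ENNReal.ofReal (Matrix.trace X).re +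
        ∑' j : {j : ℤ // j ∉ A}, y j (B i j * X * (B i (j : ℤ))ᴴ))
    (i : ℤ) (ρ : Matrix (Fin k) (Fin k) ℂ) (hρ : ρ.PosSemidef)
    (htr : Matrix.trace ρ = 1) :
    meanHit B A i ρ ≤ y i ρ := by
  by_cases hi : i ∈ A
  · unfold meanHit
    rw [if_pos hi]
    exact zero_le
  · rw [meanHit_eq_tsum_gfun B A hi, ENNReal.tsum_eq_iSup_nat]
    exact iSup_le fun n => partial_le B A hcertain y hrec n i hi ρ hρ

end Main

/-- assuming hitting A is certain, the mean hitting times satisfy the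
one-step recursion k̂_i(ρ) = 1 + ∑_{j∉A} k̂_j(B_i^j ρ (B_i^j)*) for i ∉ A, and (k̂_i) is
the minimal nonnegative solution: any additive, positively homogeneous [0,∞]-valued
family (y_i) vanishing on A and satisfying y_i(X) = tr(X) + ∑_{j∉A} y_j(B_i^j X (B_i^j)*)
for i ∉ A dominates it on density matrices. -/
theorem meanHit_recursion_and_minimal (k : ℕ) (hk : 1 ≤ k)
    (B : ℤ → ℤ → Matrix (Fin k) (Fin k) ℂ)
    (hfin : ∀ i, {j : ℤ | B i j ≠ 0}.Finite)
    (hunit : ∀ i, ∑ᶠ j : ℤ, (B i j)ᴴ * B i j = 1)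
    (A : Set ℤ)
    (hcertain : ∀ j ∉ A, ∀ ρ : Matrix (Fin k) (Fin k) ℂ, ρ.PosSemidef →
      Matrix.trace ρ = 1 → hitProb B A j ρ = 1) :
    (∀ i ∉ A, ∀ ρ : Matrix (Fin k) (Fin k) ℂ, ρ.PosSemidef → Matrix.trace ρ = 1 →
      meanHit B A i ρ =
        1 + ∑' j : {j : ℤ // j ∉ A}, meanHit B A j (B i j * ρ * (B i (j : ℤ))ᴴ)) ∧
    (∀ y : ℤ → (Matrix (Fin k) (Fin k) ℂ → ℝ≥0∞),
      (∀ i (X Y : Matrix (Fin k) (Fin k) ℂ), X.PosSemidef → Y.PosSemidef →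
        y i (X + Y) = y i X + y i Y) →
      (∀ i (c : ℝ≥0) (X : Matrix (Fin k) (Fin k) ℂ), X.PosSemidef →
        y i (((c : ℝ) : ℂ) • X) = (c : ℝ≥0∞) * y i X) →
      (∀ i ∈ A, ∀ X : Matrix (Fin k) (Fin k) ℂ, y i X = 0) →
      (∀ i ∉ A, ∀ X : Matrix (Fin k) (Fin k) ℂ, X.PosSemidef →
        y i X = ENNReal.ofReal (Matrix.trace X).re +
          ∑' j : {j : ℤ // j ∉ A}, y j (B i j * X * (B i (j : ℤ))ᴴ)) →
      ∀ i : ℤ, ∀ ρ : Matrix (Fin k) (Fin k) ℂ, ρ.PosSemidef → Matrix.trace ρ = 1 →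
        meanHit B A i ρ ≤ y i ρ) := by
  
  constructor
  · intro i hi ρ hρ htr
    exact meanHit_rec B A hfin hunit hcertain hi ρ hρ htr
  · intro y hadd hhom hzero hrec i ρ hρ htr
    exact meanHit_le B A hcertain y hzero hrec i ρ hρ htr
end

section
/- Let (B_i^j)_{i,j∈ℤ} define an OQRW on ℤ, let a ≥ 1, D = {i ∈ ℤ : −a < i < a}, ∂D = {−a, a}, and assume B_i^j = 0 whenever i ∈ D and j ∉ D ∪ ∂D. Let c : D → [0,∞) and f : ∂D → [0,∞) be cost functions and φ the associated potential. Suppose (ψ_i)_{i∈D∪∂D} is a family of linear functionals on the k×k complex matrices such that ψ_i(X) ≥ 0 for positive semidefinite X, ψ_j(X) ≥ f(j)·tr(X) for every j ∈ ∂D and positive semidefinite X, and ψ_i(X) ≥ c(i)·tr(X) + ∑_{j∈D∪∂D} ψ_j( B_i^j X (B_i^j)* ) for every i ∈ D and positive semidefinite X. Then ψ_i(ρ) ≥ φ_i(ρ) for every i ∈ D and every density matrix ρ. -/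
open Matrix ComplexOrder
open scoped ENNReal

/-- A first-passage path from `i ∈ D = (−a, a)` to the boundary `∂D = {−a, a}`:
a finite sequence i = x₀, x₁, …, x_r with r ≥ 1, x₀, …, x_{r−1} ∈ D and x_r ∈ ∂D. -/
structure BPath (a i : ℤ) where
  r : ℕ
  x : ℕ → ℤ
  hr : 1 ≤ r
  hx0 : x 0 = i
  hmid : ∀ m, m < r → -a < x m ∧ x m < a
  hlast : x r = -a ∨ x r = a
  htail : ∀ m, r ≤ m → x m = x r

/-- The path operator C = B_{x_{r−1}}^{x_r} ⋯ B_{x₁}^{x₂} B_{x₀}^{x₁}. -/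
noncomputable def bpathOp {k : ℕ} (B : ℤ → ℤ → Matrix (Fin k) (Fin k) ℂ)
    {a i : ℤ} (p : BPath a i) : Matrix (Fin k) (Fin k) ℂ :=
  (List.range p.r).foldl (fun M m => B (p.x m) (p.x (m + 1)) * M) 1

/-- The potential φ_i(X) = ∑ over first-passage paths from i to ∂D of
[c(x₀) + ⋯ + c(x_{r−1}) + f(x_r)]·tr(C X C*), valued in [0, ∞]. -/
noncomputable def potential {k : ℕ} (B : ℤ → ℤ → Matrix (Fin k) (Fin k) ℂ)
    (a : ℤ) (c f : ℤ → ℝ) (i : ℤ) (X : Matrix (Fin k) (Fin k) ℂ) : ℝ≥0∞ :=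
  ∑' p : BPath a i,
    ENNReal.ofReal ((∑ m ∈ Finset.range p.r, c (p.x m)) + f (p.x p.r)) *
      ENNReal.ofReal (Matrix.trace (bpathOp B p * X * (bpathOp B p)ᴴ)).re

lemma BPath.ext' {a i : ℤ} {p q : BPath a i} (h1 : p.r = q.r)
    (h2 : ∀ m, p.x m = q.x m) : p = q := by
  obtain ⟨pr, px, _, _, _, _, _⟩ := p
  obtain ⟨qr, qx, _, _, _, _, _⟩ := q
  simp only at h1 h2
  subst h1
  have : px = qx := funext h2
  subst this
  rfl

lemma bpath_mem {a i : ℤ} (p : BPath a i) : -a < i ∧ i < a := by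
  have := p.hmid 0 p.hr
  rwa [p.hx0] at this

def BPath.tail {a i : ℤ} (p : BPath a i) (h : 2 ≤ p.r) : BPath a (p.x 1) where
  r := p.r - 1
  x := fun m => p.x (m + 1)
  hr := by omega
  hx0 := rfl
  hmid := fun m hm => p.hmid (m + 1) (by omega)
  hlast := by
    show p.x (p.r - 1 + 1) = -a ∨ p.x (p.r - 1 + 1) = a
    rw [show p.r - 1 + 1 = p.r by omega]
    exact p.hlast
  htail := fun m hm => by
    show p.x (m + 1) = p.x (p.r - 1 + 1)
    rw [show p.r - 1 + 1 = p.r by omega]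
    exact p.htail (m + 1) (by omega)

lemma foldl_shift {M : Type*} [Monoid M] (A : ℕ → M) (n : ℕ) :
    (List.range (n + 1)).foldl (fun m' m => A m * m') 1
      = (List.range n).foldl (fun m' m => A (m + 1) * m') 1 * A 0 := by
  induction n with
  | zero => simp [List.range_succ]
  | succ n ih =>
      rw [List.range_succ, List.foldl_append, show n + 1 = n + 1 from rfl]
      conv_rhs => rw [List.range_succ, List.foldl_append]
      simp only [List.foldl_cons, List.foldl_nil]
      rw [ih, mul_assoc]

lemma bpathOp_tail {k : ℕ} (B : ℤ → ℤ → Matrix (Fin k) (Fin k) ℂ)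
    {a i : ℤ} (p : BPath a i) (h : 2 ≤ p.r) :
    bpathOp B p = bpathOp B (p.tail h) * B i (p.x 1) := by
  unfold bpathOp
  have h0 : p.r = (p.r - 1) + 1 := by omega
  rw [h0, foldl_shift (fun m => B (p.x m) (p.x (m + 1))) (p.r - 1), p.hx0]
  rfl

lemma bpathOp_one {k : ℕ} (B : ℤ → ℤ → Matrix (Fin k) (Fin k) ℂ)
    {a i : ℤ} (p : BPath a i) (h : p.r = 1) :
    bpathOp B p = B i (p.x 1) := by
  rw [show bpathOp B p = (List.range p.r).foldl (fun M m => B (p.x m) (p.x (m + 1)) * M) 1 from rfl, h]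
  simp [List.range_succ, p.hx0]

noncomputable def pwt (c f : ℤ → ℝ) {a i : ℤ} (p : BPath a i) : ℝ :=
  (∑ m ∈ Finset.range p.r, c (p.x m)) + f (p.x p.r)

noncomputable def ptr {k : ℕ} (B : ℤ → ℤ → Matrix (Fin k) (Fin k) ℂ) {a i : ℤ}
    (p : BPath a i) (X : Matrix (Fin k) (Fin k) ℂ) : ℝ≥0∞ :=
  ENNReal.ofReal (Matrix.trace (bpathOp B p * X * (bpathOp B p)ᴴ)).re

lemma pwt_tail (c f : ℤ → ℝ) {a i : ℤ} (p : BPath a i) (h : 2 ≤ p.r) :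
    pwt c f p = c i + pwt c f (p.tail h) := by
  unfold pwt
  have h0 : p.r = (p.r - 1) + 1 := by omega
  rw [h0, Finset.sum_range_succ']
  have h1 : (p.tail h).r = p.r - 1 := rfl
  have h2 : ∀ m, (p.tail h).x m = p.x (m + 1) := fun m => rfl
  rw [h1]
  simp only [h2, p.hx0]
  ring_nf

lemma pwt_one (c f : ℤ → ℝ) {a i : ℤ} (p : BPath a i) (h : p.r = 1) :
    pwt c f p = c i + f (p.x 1) := by
  unfold pwt
  rw [h]
  simp [p.hx0]

lemma ptr_tail {k : ℕ} (B : ℤ → ℤ → Matrix (Fin k) (Fin k) ℂ)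
    {a i : ℤ} (p : BPath a i) (h : 2 ≤ p.r) (X : Matrix (Fin k) (Fin k) ℂ) :
    ptr B p X = ptr B (p.tail h) (B i (p.x 1) * X * (B i (p.x 1))ᴴ) := by
  unfold ptr
  rw [bpathOp_tail B p h, conjTranspose_mul]
  congr 2
  noncomm_ring

noncomputable def mp {a i : ℤ} (p : BPath a i) : Σ j : ℤ, Option (BPath a j) :=
  if h : p.r = 1 then ⟨p.x 1, none⟩
  else ⟨p.x 1, some (p.tail (by have := p.hr; omega))⟩

def Fy {a : ℤ} (y : Σ j : ℤ, Option (BPath a j)) : ℕ :=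
  match y.2 with
  | none => 1
  | some q => q.r + 1

def Gy (i : ℤ) {a : ℤ} (y : Σ j : ℤ, Option (BPath a j)) (m : ℕ) : ℤ :=
  if m = 0 then i else
    match y.2 with
    | none => y.1
    | some q => q.x (m - 1)

lemma mp_inj {a i : ℤ} : Function.Injective (mp (a := a) (i := i)) := by
  classical
  have key : ∀ p : BPath a i, p.r = Fy (mp p) ∧ ∀ m, p.x m = Gy i (mp p) m := by
    intro p
    unfold mp
    split_ifs with h1
    · refine ⟨by simp [Fy, h1], fun m => ?_⟩
      show p.x m = if m = 0 then i else p.x 1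
      rcases Nat.eq_zero_or_pos m with hm | hm
      · simp [hm, p.hx0]
      · rw [if_neg (by omega)]
        have h2 : p.x m = p.x p.r := p.htail m (by omega)
        rw [h2, h1]
    · have h2 : 2 ≤ p.r := by have := p.hr; omega
      refine ⟨?_, fun m => ?_⟩
      · show p.r = p.r - 1 + 1
        omega
      · show p.x m = if m = 0 then i else p.x (m - 1 + 1)
        rcases Nat.eq_zero_or_pos m with hm | hm
        · simp [hm, p.hx0]
        · rw [if_neg (by omega)]
          congr 1
          omega
  intro p q h
  refine BPath.ext' ?_ ?_
  · rw [(key p).1, (key q).1, h]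
  · intro m
    rw [(key p).2 m, (key q).2 m, h]

lemma tsum_option' {β : Type*} (g : Option β → ℝ≥0∞) :
    ∑' o : Option β, g o = g none + ∑' b : β, g (some b) := by
  classical
  rw [ENNReal.summable.tsum_eq_add_tsum_ite' (none : Option β)]
  congr 1
  refine tsum_eq_tsum_of_ne_zero_bij (fun b => some b.1) ?_ ?_ ?_
  · intro b b' hb
    simpa [Subtype.ext_iff] using hb
  · intro o ho
    simp only [Function.mem_support, ne_eq] at ho
    match o, ho with
    | some b, ho =>
        refine ⟨⟨b, ?_⟩, rfl⟩
        simpa using ho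
  · intro b
    simp

lemma decomp {a i : ℤ} (H : (j : ℤ) → Option (BPath a j) → ℝ≥0∞)
    (hH : ∀ j, j ∉ Finset.Icc (-a) a → ∀ o : Option (BPath a j), H j o = 0) :
    (∑' p : BPath a i, H (mp p).1 (mp p).2)
      ≤ ∑ j ∈ Finset.Icc (-a) a, (H j none + ∑' q : BPath a j, H j (some q)) := by
  have h1 : (∑' p : BPath a i, H (mp p).1 (mp p).2)
      ≤ ∑' y : Σ j : ℤ, Option (BPath a j), H y.1 y.2 :=
    ENNReal.tsum_comp_le_tsum_of_injective mp_inj (fun y => H y.1 y.2)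
  refine h1.trans (le_of_eq ?_)
  rw [ENNReal.tsum_sigma' (fun y : Σ j : ℤ, Option (BPath a j) => H y.1 y.2)]
  have h2 : ∀ j : ℤ, (∑' o : Option (BPath a j), H j o)
      = H j none + ∑' q : BPath a j, H j (some q) := fun j => tsum_option' _
  calc (∑' j : ℤ, ∑' o : Option (BPath a j), H j o)
      = ∑' j : ℤ, (H j none + ∑' q : BPath a j, H j (some q)) := by
        exact tsum_congr h2
    _ = ∑ j ∈ Finset.Icc (-a) a, (H j none + ∑' q : BPath a j, H j (some q)) := by
        refine tsum_eq_sum ?_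
        intro j hj
        rw [hH j hj none]
        simp only [hH j hj]
        rw [tsum_zero, add_zero]

lemma trace_re_nonneg {k : ℕ} {X : Matrix (Fin k) (Fin k) ℂ} (hX : X.PosSemidef) :
    0 ≤ (Matrix.trace X).re := by
  have h : ∀ i, 0 ≤ X i i := by
    intro i
    exact hX.diag_nonneg
  have h2 : 0 ≤ Matrix.trace X := Finset.sum_nonneg fun i _ => h i
  exact (Complex.nonneg_iff.mp h2).1

lemma mp_eq_one {a i : ℤ} (p : BPath a i) (h : p.r = 1) :
    mp p = ⟨p.x 1, none⟩ := dif_pos h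

lemma mp_eq_tail {a i : ℤ} (p : BPath a i) (h : ¬ p.r = 1) :
    mp p = ⟨p.x 1, some (p.tail (by have := p.hr; omega))⟩ := dif_neg h


/-- minimality of the potential. If (ψ_i) is a family of linear
functionals, nonnegative on positive semidefinite matrices, with
ψ_j(X) ≥ f(j)·tr(X) on ∂D and ψ_i(X) ≥ c(i)·tr(X) + ∑_{j∈D∪∂D} ψ_j(B_i^j X (B_i^j)*)
on D (for positive semidefinite X), then ψ_i(ρ) ≥ φ_i(ρ) for every i ∈ D and every
density matrix ρ. -/
theorem potential_minimal (k : ℕ) (hk : 1 ≤ k)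
    (B : ℤ → ℤ → Matrix (Fin k) (Fin k) ℂ)
    (hfin : ∀ i, {j : ℤ | B i j ≠ 0}.Finite)
    (hunit : ∀ i, ∑ᶠ j : ℤ, (B i j)ᴴ * B i j = 1)
    (a : ℤ) (ha : 1 ≤ a)
    (hzero : ∀ i j : ℤ, -a < i → i < a → (j < -a ∨ a < j) → B i j = 0)
    (c f : ℤ → ℝ)
    (hc : ∀ i : ℤ, -a < i → i < a → 0 ≤ c i)
    (hf : 0 ≤ f (-a) ∧ 0 ≤ f a)
    (ψ : ℤ → (Matrix (Fin k) (Fin k) ℂ →ₗ[ℂ] ℂ))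
    (hψpos : ∀ i (X : Matrix (Fin k) (Fin k) ℂ), X.PosSemidef →
      0 ≤ (ψ i X).re ∧ (ψ i X).im = 0)
    (hψbdry : ∀ j : ℤ, (j = -a ∨ j = a) → ∀ X : Matrix (Fin k) (Fin k) ℂ,
      X.PosSemidef → f j * (Matrix.trace X).re ≤ (ψ j X).re)
    (hψint : ∀ i : ℤ, -a < i → i < a → ∀ X : Matrix (Fin k) (Fin k) ℂ, X.PosSemidef →
      c i * (Matrix.trace X).re
          + ∑ j ∈ Finset.Icc (-a) a, (ψ j (B i j * X * (B i j)ᴴ)).re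
        ≤ (ψ i X).re) :
    ∀ i : ℤ, -a < i → i < a →
      ∀ ρ : Matrix (Fin k) (Fin k) ℂ, ρ.PosSemidef → Matrix.trace ρ = 1 →
        potential B a c f i ρ ≤ ENNReal.ofReal ((ψ i ρ).re) := by
  classical
  -- positive semidefiniteness of conjugated matrices
  have hYpsd : ∀ (i j : ℤ) (X : Matrix (Fin k) (Fin k) ℂ), X.PosSemidef →
      (B i j * X * (B i j)ᴴ).PosSemidef :=
    fun i j X hX => hX.mul_mul_conjTranspose_same _
  -- unitarity over the finite window
  have sum_BB : ∀ i : ℤ, -a < i → i < a →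
      ∑ j ∈ Finset.Icc (-a) a, (B i j)ᴴ * B i j = 1 := by
    intro i hi1 hi2
    rw [← hunit i]
    refine (finsum_eq_finset_sum_of_support_subset _ ?_).symm
    intro j hj
    simp only [Function.mem_support, ne_eq] at hj
    simp only [Finset.coe_Icc, Set.mem_Icc]
    by_contra hmem
    push_neg at hmem
    have : B i j = 0 := by
      apply hzero i j hi1 hi2
      by_cases hle : -a ≤ j
      · exact Or.inr (hmem hle)
      · exact Or.inl (by omega)
    rw [this] at hj
    simp at hj
  have sum_tr : ∀ i : ℤ, -a < i → i < a → ∀ X : Matrix (Fin k) (Fin k) ℂ,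
      ∑ j ∈ Finset.Icc (-a) a, (Matrix.trace (B i j * X * (B i j)ᴴ)).re
        = (Matrix.trace X).re := by
    intro i hi1 hi2 X
    rw [← Complex.re_sum]
    congr 1
    calc ∑ j ∈ Finset.Icc (-a) a, Matrix.trace (B i j * X * (B i j)ᴴ)
        = ∑ j ∈ Finset.Icc (-a) a, Matrix.trace ((B i j)ᴴ * B i j * X) := by
          refine Finset.sum_congr rfl fun j _ => ?_
          rw [Matrix.trace_mul_cycle]
      _ = Matrix.trace ((∑ j ∈ Finset.Icc (-a) a, (B i j)ᴴ * B i j) * X) := by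
          rw [Finset.sum_mul, Matrix.trace_sum]
      _ = Matrix.trace X := by rw [sum_BB i hi1 hi2, one_mul]
  -- nonnegativity of weights
  have wt_nonneg : ∀ {i : ℤ} (p : BPath a i), 0 ≤ pwt c f p := by
    intro i p
    refine add_nonneg (Finset.sum_nonneg fun m hm => ?_) ?_
    · have := p.hmid m (Finset.mem_range.mp hm)
      exact hc _ this.1 this.2
    · rcases p.hlast with h | h <;> rw [h]
      exacts [hf.1, hf.2]
  have hψnn : ∀ (j : ℤ) (X : Matrix (Fin k) (Fin k) ℂ), X.PosSemidef →
      0 ≤ (ψ j X).re := fun j X hX => (hψpos j X hX).1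
  -- Claim A: substochasticity of truncated path sums
  have claimA : ∀ n : ℕ, ∀ j : ℤ, -a < j → j < a →
      ∀ X : Matrix (Fin k) (Fin k) ℂ, X.PosSemidef →
      (∑' q : BPath a j, if q.r ≤ n then ptr B q X else 0)
        ≤ ENNReal.ofReal (Matrix.trace X).re := by
    intro n
    induction n with
    | zero =>
        intro j hj1 hj2 X hX
        have h0 : ∀ q : BPath a j, (if q.r ≤ 0 then ptr B q X else 0) = 0 :=
          fun q => if_neg (by have := q.hr; omega)
        rw [tsum_congr h0, tsum_zero]
        exact zero_le
    | succ n ih =>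
        intro j hj1 hj2 X hX
        set H : (j' : ℤ) → Option (BPath a j') → ℝ≥0∞ := fun j' o =>
          o.elim
            (if j' = -a ∨ j' = a then
              ENNReal.ofReal (Matrix.trace (B j j' * X * (B j j')ᴴ)).re else 0)
            (fun q => if q.r ≤ n then ptr B q (B j j' * X * (B j j')ᴴ) else 0)
          with hHdef
        have hH : ∀ j', j' ∉ Finset.Icc (-a) a → ∀ o : Option (BPath a j'), H j' o = 0 := by
          intro j' hj' o
          match o with
          | none =>
              simp only [hHdef, Option.elim]
              rw [if_neg]
              rintro (rfl | rfl) <;>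
                exact hj' (Finset.mem_Icc.mpr (by omega))
          | some q =>
              have := bpath_mem q
              exact absurd (Finset.mem_Icc.mpr ⟨by omega, by omega⟩) hj'
        have hpt : ∀ p : BPath a j,
            (if p.r ≤ n + 1 then ptr B p X else 0) ≤ H (mp p).1 (mp p).2 := by
          intro p
          by_cases hp1 : p.r = 1
          · rw [mp_eq_one p hp1]
            have hx1 : p.x 1 = -a ∨ p.x 1 = a := by
              have := p.hlast
              rwa [hp1] at this
            simp only [hHdef, Option.elim]
            rw [if_pos hx1, if_pos (by omega), ptr, bpathOp_one B p hp1]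
          · rw [mp_eq_tail p hp1]
            have h2 : 2 ≤ p.r := by have := p.hr; omega
            simp only [hHdef, Option.elim]
            by_cases hpn : p.r ≤ n + 1
            · rw [if_pos hpn, if_pos (show (p.tail _).r ≤ n from by
                show p.r - 1 ≤ n; omega)]
              rw [ptr_tail B p h2 X]
            · rw [if_neg hpn]
              exact zero_le
        calc (∑' q : BPath a j, if q.r ≤ n + 1 then ptr B q X else 0)
            ≤ ∑' p : BPath a j, H (mp p).1 (mp p).2 :=
              Summable.tsum_le_tsum hpt ENNReal.summable ENNReal.summable
          _ ≤ ∑ j' ∈ Finset.Icc (-a) a,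
                (H j' none + ∑' q : BPath a j', H j' (some q)) := decomp H hH
          _ ≤ ∑ j' ∈ Finset.Icc (-a) a,
                ENNReal.ofReal (Matrix.trace (B j j' * X * (B j j')ᴴ)).re := by
              refine Finset.sum_le_sum fun j' hj' => ?_
              by_cases hb : j' = -a ∨ j' = a
              · have hz : (∑' q : BPath a j', H j' (some q)) = 0 := by
                  rw [tsum_congr (fun q : BPath a j' => ?_), tsum_zero]
                  have := bpath_mem q
                  exact absurd hb (by rcases hb with rfl | rfl <;> omega)
                rw [hz, add_zero]
                simp only [hHdef, Option.elim]
                rw [if_pos hb]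
              · have hmem := Finset.mem_Icc.mp hj'
                have hj'1 : -a < j' := by rcases hmem with ⟨h1, h2⟩; omega
                have hj'2 : j' < a := by rcases hmem with ⟨h1, h2⟩; omega
                have hz : H j' none = 0 := by
                  simp only [hHdef, Option.elim]
                  exact if_neg hb
                rw [hz, zero_add]
                exact ih j' hj'1 hj'2 _ (hYpsd j j' X hX)
          _ = ENNReal.ofReal
                (∑ j' ∈ Finset.Icc (-a) a, (Matrix.trace (B j j' * X * (B j j')ᴴ)).re) :=
              (ENNReal.ofReal_sum_of_nonneg fun j' _ =>
                trace_re_nonneg (hYpsd j j' X hX)).symm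
          _ = ENNReal.ofReal (Matrix.trace X).re := by rw [sum_tr j hj1 hj2 X]
  -- Claim B: truncated potential is dominated by ψ
  have claimB : ∀ n : ℕ, ∀ j : ℤ, -a < j → j < a →
      ∀ X : Matrix (Fin k) (Fin k) ℂ, X.PosSemidef →
      (∑' q : BPath a j, if q.r ≤ n then ENNReal.ofReal (pwt c f q) * ptr B q X else 0)
        ≤ ENNReal.ofReal ((ψ j X).re) := by
    intro n
    induction n with
    | zero =>
        intro j hj1 hj2 X hX
        have h0 : ∀ q : BPath a j,
            (if q.r ≤ 0 then ENNReal.ofReal (pwt c f q) * ptr B q X else 0) = 0 :=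
          fun q => if_neg (by have := q.hr; omega)
        rw [tsum_congr h0, tsum_zero]
        exact zero_le
    | succ n ih =>
        intro j hj1 hj2 X hX
        set H : (j' : ℤ) → Option (BPath a j') → ℝ≥0∞ := fun j' o =>
          o.elim
            (if j' = -a ∨ j' = a then
              ENNReal.ofReal (c j + f j') *
                ENNReal.ofReal (Matrix.trace (B j j' * X * (B j j')ᴴ)).re else 0)
            (fun q => if q.r ≤ n then
              ENNReal.ofReal (c j + pwt c f q) * ptr B q (B j j' * X * (B j j')ᴴ) else 0)
          with hHdef
        have hH : ∀ j', j' ∉ Finset.Icc (-a) a → ∀ o : Option (BPath a j'), H j' o = 0 := by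
          intro j' hj' o
          match o with
          | none =>
              simp only [hHdef, Option.elim]
              rw [if_neg]
              rintro (rfl | rfl) <;>
                exact hj' (Finset.mem_Icc.mpr (by omega))
          | some q =>
              have := bpath_mem q
              exact absurd (Finset.mem_Icc.mpr ⟨by omega, by omega⟩) hj'
        have hpt : ∀ p : BPath a j,
            (if p.r ≤ n + 1 then ENNReal.ofReal (pwt c f p) * ptr B p X else 0)
              ≤ H (mp p).1 (mp p).2 := by
          intro p
          by_cases hp1 : p.r = 1
          · rw [mp_eq_one p hp1]
            have hx1 : p.x 1 = -a ∨ p.x 1 = a := by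
              have := p.hlast
              rwa [hp1] at this
            simp only [hHdef, Option.elim]
            rw [if_pos hx1, if_pos (by omega), ptr, bpathOp_one B p hp1,
              pwt_one c f p hp1]
          · rw [mp_eq_tail p hp1]
            have h2 : 2 ≤ p.r := by have := p.hr; omega
            simp only [hHdef, Option.elim]
            by_cases hpn : p.r ≤ n + 1
            · rw [if_pos hpn, if_pos (show (p.tail _).r ≤ n from by
                show p.r - 1 ≤ n; omega)]
              rw [ptr_tail B p h2 X, pwt_tail c f p h2]
            · rw [if_neg hpn]
              exact zero_le
        calc (∑' q : BPath a j,
                if q.r ≤ n + 1 then ENNReal.ofReal (pwt c f q) * ptr B q X else 0)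
            ≤ ∑' p : BPath a j, H (mp p).1 (mp p).2 :=
              Summable.tsum_le_tsum hpt ENNReal.summable ENNReal.summable
          _ ≤ ∑ j' ∈ Finset.Icc (-a) a,
                (H j' none + ∑' q : BPath a j', H j' (some q)) := decomp H hH
          _ ≤ ∑ j' ∈ Finset.Icc (-a) a,
                (ENNReal.ofReal (c j) *
                    ENNReal.ofReal (Matrix.trace (B j j' * X * (B j j')ᴴ)).re
                  + ENNReal.ofReal ((ψ j' (B j j' * X * (B j j')ᴴ)).re)) := by
              refine Finset.sum_le_sum fun j' hj' => ?_
              have hYp := hYpsd j j' X hX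
              by_cases hb : j' = -a ∨ j' = a
              · have hz : (∑' q : BPath a j', H j' (some q)) = 0 := by
                  rw [tsum_congr (fun q : BPath a j' => ?_), tsum_zero]
                  have := bpath_mem q
                  exact absurd hb (by rcases hb with rfl | rfl <;> omega)
                rw [hz, add_zero]
                simp only [hHdef, Option.elim]
                rw [if_pos hb]
                have hfj : 0 ≤ f j' := by
                  rcases hb with rfl | rfl
                  exacts [hf.1, hf.2]
                rw [ENNReal.ofReal_add (hc j hj1 hj2) hfj, add_mul]
                refine add_le_add_right ?_ _
                rw [← ENNReal.ofReal_mul hfj]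
                exact ENNReal.ofReal_le_ofReal (hψbdry j' hb _ hYp)
              · have hmem := Finset.mem_Icc.mp hj'
                have hj'1 : -a < j' := by rcases hmem with ⟨h1, h2⟩; omega
                have hj'2 : j' < a := by rcases hmem with ⟨h1, h2⟩; omega
                have hz : H j' none = 0 := by
                  simp only [hHdef, Option.elim]
                  exact if_neg hb
                rw [hz, zero_add]
                have hsplit : ∀ q : BPath a j',
                    (H j' (some q) : ℝ≥0∞)
                      = (if q.r ≤ n then
                          ENNReal.ofReal (c j) * ptr B q (B j j' * X * (B j j')ᴴ) else 0)
                        + (if q.r ≤ n then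
                          ENNReal.ofReal (pwt c f q) * ptr B q (B j j' * X * (B j j')ᴴ)
                          else 0) := by
                  intro q
                  simp only [hHdef, Option.elim]
                  split_ifs with hq
                  · rw [ENNReal.ofReal_add (hc j hj1 hj2) (wt_nonneg q), add_mul]
                  · rw [add_zero]
                rw [tsum_congr hsplit, ENNReal.tsum_add]
                refine add_le_add ?_ (ih j' hj'1 hj'2 _ hYp)
                have hfac : ∀ q : BPath a j',
                    (if q.r ≤ n then
                        ENNReal.ofReal (c j) * ptr B q (B j j' * X * (B j j')ᴴ) else 0)
                      = ENNReal.ofReal (c j) *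
                        (if q.r ≤ n then ptr B q (B j j' * X * (B j j')ᴴ) else 0) := by
                  intro q
                  split_ifs with hq
                  · rfl
                  · rw [mul_zero]
                rw [tsum_congr hfac, ENNReal.tsum_mul_left]
                exact mul_le_mul_right (claimA n j' hj'1 hj'2 _ hYp) _
          _ = ENNReal.ofReal (c j) *
                ENNReal.ofReal
                  (∑ j' ∈ Finset.Icc (-a) a, (Matrix.trace (B j j' * X * (B j j')ᴴ)).re)
              + ENNReal.ofReal
                  (∑ j' ∈ Finset.Icc (-a) a, (ψ j' (B j j' * X * (B j j')ᴴ)).re) := by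
              rw [Finset.sum_add_distrib, ← Finset.mul_sum,
                ENNReal.ofReal_sum_of_nonneg
                  (fun j' _ => trace_re_nonneg (hYpsd j j' X hX)),
                ENNReal.ofReal_sum_of_nonneg
                  (fun j' _ => hψnn j' _ (hYpsd j j' X hX))]
          _ = ENNReal.ofReal (c j * (Matrix.trace X).re
              + ∑ j' ∈ Finset.Icc (-a) a, (ψ j' (B j j' * X * (B j j')ᴴ)).re) := by
              rw [sum_tr j hj1 hj2 X, ← ENNReal.ofReal_mul (hc j hj1 hj2),
                ← ENNReal.ofReal_add
                  (mul_nonneg (hc j hj1 hj2) (trace_re_nonneg hX))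
                  (Finset.sum_nonneg fun j' _ => hψnn j' _ (hYpsd j j' X hX))]
          _ ≤ ENNReal.ofReal ((ψ j X).re) :=
              ENNReal.ofReal_le_ofReal (hψint j hj1 hj2 X hX)
  -- conclusion
  intro i hi1 hi2 ρ hρ htr
  have hpot : potential B a c f i ρ
      = ∑' p : BPath a i, ENNReal.ofReal (pwt c f p) * ptr B p ρ := rfl
  rw [hpot, ENNReal.tsum_eq_iSup_sum]
  refine iSup_le fun s => ?_
  calc ∑ p ∈ s, ENNReal.ofReal (pwt c f p) * ptr B p ρ
      = ∑ p ∈ s, (if p.r ≤ s.sup (fun p => p.r) then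
          ENNReal.ofReal (pwt c f p) * ptr B p ρ else 0) :=
        Finset.sum_congr rfl fun p hp =>
          (if_pos (Finset.le_sup (f := fun p : BPath a i => p.r) hp)).symm
    _ ≤ ∑' p : BPath a i, (if p.r ≤ s.sup (fun p => p.r) then
          ENNReal.ofReal (pwt c f p) * ptr B p ρ else 0) :=
        Summable.sum_le_tsum s (fun _ _ => zero_le) ENNReal.summable
    _ ≤ ENNReal.ofReal ((ψ i ρ).re) :=
        claimB (s.sup (fun p => p.r)) i hi1 hi2 ρ hρ
end
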